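/- Dimension reduction principle: let X be an ℝ^p-valued random vector and Y a non-degenerate real-valued random variable on a common probability space. Then ξ(Y|X) = a · ∫_ℝ lim_{t↑y} ψ_{Y|X}(t,t) dP^Y(y) − b, where ψ_{Y|X}(y,y') := ∫_Ω E[1_{{Y ≤ y}} | X] · E[1_{{Y ≤ y'}} | X] dP, a := (∫_ℝ Var(1_{{Y ≥ y}}) dP^Y(y))^{−1}, and b := a · ∫_ℝ lim_{z↑y} F_Y(z)² dP^Y(y), and a, b are positive constants. -/

import Mathlib

open MeasureTheory ProbabilityTheory Set Filter Topology Function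
open scoped ENNReal
set_option linter.unusedSectionVars false
set_option linter.unusedVariables false
set_option linter.unusedTactic false
set_option maxHeartbeats 1000000



open MeasureTheory ProbabilityTheory

/-- Azadkia–Chatterjee's rank correlation `ξ(Y | m)` of a real random variable `Y`
given a sub-σ-algebra `m`. -/
noncomputable def xiSigma {Ω : Type*} (m : MeasurableSpace Ω) [MeasurableSpace Ω]
    (P : Measure Ω) (Y : Ω → ℝ) : ℝ :=
  (∫ y, variance (P[Set.indicator {ω | y ≤ Y ω} (fun _ => (1 : ℝ)) | m]) P ∂(P.map Y)) /
  (∫ y, variance (Set.indicator {ω | y ≤ Y ω} (fun _ => (1 : ℝ))) P ∂(P.map Y))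

/-- Azadkia–Chatterjee's rank correlation `ξ(Y | X)`: conditioning on the σ-algebra
generated by the random vector `X`. -/
noncomputable def xi {Ω α : Type*} [MeasurableSpace Ω] [MeasurableSpace α]
    (P : Measure Ω) (Y : Ω → ℝ) (X : Ω → α) : ℝ :=
  xiSigma (MeasurableSpace.comap X inferInstance) P Y

/-- The σ-algebra generated by the response variables with index `< i`,
i.e. by `(Y_1, …, Y_{i-1})`; for `i = 0` it is the trivial σ-algebra `⊥`,
so that `xiSigma (sigmaPast Y 0) P (Y 0) = ξ(Y_1 | ∅) = 0`. -/
def sigmaPast {Ω : Type*} {q : ℕ} (Y : Fin q → Ω → ℝ) (i : Fin q) :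
    MeasurableSpace Ω :=
  ⨆ j : Fin q, ⨆ _ : j < i, MeasurableSpace.comap (Y j) inferInstance

/-- The extension `T(Y | X)` of Azadkia–Chatterjee's rank correlation to a vector
`Y = (Y_1, …, Y_q)` of response variables, given the predictor vector `X`:
`T(Y|X) = 1 − (q − ∑_i ξ(Y_i | (X,Y_{i−1},…,Y_1))) / (q − ∑_i ξ(Y_i | (Y_{i−1},…,Y_1)))`. -/
noncomputable def T {Ω α : Type*} [MeasurableSpace Ω] [MeasurableSpace α]
    (P : Measure Ω) {q : ℕ} (Y : Fin q → Ω → ℝ) (X : Ω → α) : ℝ :=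
  1 - ((q : ℝ) - ∑ i, xiSigma (MeasurableSpace.comap X inferInstance ⊔ sigmaPast Y i) P (Y i)) /
      ((q : ℝ) - ∑ i, xiSigma (sigmaPast Y i) P (Y i))

/-- A real random variable is non-degenerate if it is not almost surely constant. -/
def Nondegenerate {Ω : Type*} [MeasurableSpace Ω] (P : Measure Ω) (Y : Ω → ℝ) : Prop :=
  ¬ ∃ c : ℝ, ∀ᵐ ω ∂P, Y ω = c

/-- The integral transform `ψ_{Y|X}(y,y') = ∫_Ω E[1_{Y ≤ y} | X] · E[1_{Y ≤ y'} | X] dP`. -/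
noncomputable def psi {Ω α : Type*} [MeasurableSpace Ω] [MeasurableSpace α]
    (P : Measure Ω) (Y : Ω → ℝ) (X : Ω → α) (y y' : ℝ) : ℝ :=
  ∫ ω,
    (MeasureTheory.condExp (MeasurableSpace.comap X inferInstance) P
        (Set.indicator {ω' | Y ω' ≤ y} (fun _ => (1 : ℝ))) ω) *
    (MeasureTheory.condExp (MeasurableSpace.comap X inferInstance) P
        (Set.indicator {ω' | Y ω' ≤ y'} (fun _ => (1 : ℝ))) ω) ∂P

/-- The cumulative distribution function `F_W(w) = P(W ≤ w)` of a real random variable `W`. -/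
noncomputable def cdf {Ω : Type*} [MeasurableSpace Ω] (P : Measure Ω) (W : Ω → ℝ) (w : ℝ) : ℝ :=
  (P {ω | W ω ≤ w}).toReal

namespace ACCaux

noncomputable def ind {Ω : Type*} (s : Set Ω) : Ω → ℝ := s.indicator fun _ => 1

variable {Ω : Type*} [mΩ : MeasurableSpace Ω] {P : Measure Ω} [IsProbabilityMeasure P] {Y : Ω → ℝ}

lemma ind_nonneg {s : Set Ω} (ω : Ω) : 0 ≤ ind s ω := Set.indicator_nonneg (fun _ _ => zero_le_one) ω

lemma ind_le_one {s : Set Ω} (ω : Ω) : ind s ω ≤ 1 :=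
  Set.indicator_le' (fun _ _ => le_rfl) (fun _ _ => zero_le_one) ω

lemma ind_sq {s : Set Ω} : (ind s) ^ 2 = ind s := by
  funext ω
  by_cases h : ω ∈ s <;> simp [ind, h]

lemma stronglyMeasurable_ind {s : Set Ω} (hs : MeasurableSet s) :
    StronglyMeasurable (ind s) :=
  (stronglyMeasurable_const.indicator hs)

lemma integrable_ind {s : Set Ω} (hs : MeasurableSet s) : Integrable (ind s) P :=
  (integrable_const (1:ℝ)).indicator hs

lemma integral_ind {s : Set Ω} (hs : MeasurableSet s) : ∫ ω, ind s ω ∂P = (P s).toReal := by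
  have h := integral_indicator_one (μ := P) hs
  rw [measureReal_def] at h
  exact h

lemma memℒp_ind {s : Set Ω} (hs : MeasurableSet s) : MemLp (ind s) 2 P := by
  refine MemLp.of_bound (stronglyMeasurable_ind hs).aestronglyMeasurable 1 ?_
  filter_upwards with ω
  rw [Real.norm_eq_abs, abs_le]
  exact ⟨by linarith [ind_nonneg (s := s) ω], ind_le_one ω⟩


lemma variance_ind {s : Set Ω} (hs : MeasurableSet s) :
    variance (ind s) P = (P s).toReal * (1 - (P s).toReal) := by
  rw [variance_eq_sub (memℒp_ind hs), ind_sq, integral_ind hs]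
  ring

lemma measurableSet_le (hY : Measurable Y) (t : ℝ) : MeasurableSet {ω | Y ω ≤ t} :=
  hY measurableSet_Iic

lemma measurableSet_lt' (hY : Measurable Y) (t : ℝ) : MeasurableSet {ω | Y ω < t} :=
  hY measurableSet_Iio

lemma measurableSet_ge (hY : Measurable Y) (t : ℝ) : MeasurableSet {ω | t ≤ Y ω} :=
  hY measurableSet_Ici

lemma compl_ge (y : ℝ) : {ω | y ≤ Y ω}ᶜ = {ω | Y ω < y} := by
  ext ω; simp [not_le]

lemma prob_ge_eq (hY : Measurable Y) (y : ℝ) :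
    (P {ω | y ≤ Y ω}).toReal = 1 - (P {ω | Y ω < y}).toReal := by
  have h := measure_compl (measurableSet_lt' hY y) (measure_ne_top P _)
  have h2 : {ω | Y ω < y}ᶜ = {ω | y ≤ Y ω} := by ext ω; simp [not_lt]
  rw [h2] at h
  rw [h, ENNReal.toReal_sub_of_le (by simpa using prob_le_one) (by simp)]
  simp

lemma cdf_mono : Monotone (_root_.cdf P Y) := fun s t hst =>
  ENNReal.toReal_mono (measure_ne_top P _) (measure_mono (fun ω (h : Y ω ≤ s) => h.trans hst))

lemma cdf_nonneg' (t : ℝ) : 0 ≤ cdf P Y t := ENNReal.toReal_nonneg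

lemma cdf_le_one' (t : ℝ) : _root_.cdf P Y t ≤ 1 := by
  have h := prob_le_one (μ := P) (s := {ω | Y ω ≤ t})
  have := ENNReal.toReal_mono (ENNReal.one_ne_top) h
  simpa [_root_.cdf] using this

/-- the approximating sequence from the left -/
noncomputable def u (y : ℝ) (n : ℕ) : ℝ := y - 1/(n+1)

lemma u_lt (y : ℝ) (n : ℕ) : u y n < y := by
  have : (0:ℝ) < 1/((n:ℝ)+1) := by positivity
  simp only [u]; linarith

lemma tendsto_u (y : ℝ) : Tendsto (u y) atTop (𝓝[<] y) := by
  apply tendsto_nhdsWithin_of_tendsto_nhds_of_eventually_within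
  · have : Tendsto (fun n : ℕ => y - 1/((n:ℝ)+1)) atTop (𝓝 (y - 0)) :=
      tendsto_const_nhds.sub tendsto_one_div_add_atTop_nhds_zero_nat
    have h2 : (fun n : ℕ => y - 1/((n:ℝ)+1)) = u y := rfl
    rw [h2, sub_zero] at this
    exact this
  · filter_upwards with n
    exact u_lt y n

lemma leftLim_eq_of_seq {g : ℝ → ℝ} (hg : Monotone g) {y L : ℝ}
    (h : Tendsto (fun n : ℕ => g (u y n)) atTop (𝓝 L)) :
    Function.leftLim g y = L :=
  tendsto_nhds_unique ((hg.tendsto_leftLim y).comp (tendsto_u y)) h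

lemma iUnion_le_u (y : ℝ) : (⋃ n : ℕ, {ω | Y ω ≤ u y n}) = {ω | Y ω < y} := by
  ext ω
  simp only [mem_iUnion, mem_setOf_eq, u]
  constructor
  · rintro ⟨n, hn⟩
    exact lt_of_le_of_lt hn (u_lt y n)
  · intro h
    obtain ⟨n, hn⟩ := exists_nat_one_div_lt (show (0:ℝ) < y - Y ω by linarith)
    exact ⟨n, by push_cast at hn ⊢; linarith⟩

lemma mono_le_u (y : ℝ) : Monotone (fun n : ℕ => {ω | Y ω ≤ u y n}) := by
  intro n m hnm ω (h : Y ω ≤ u y n)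
  have : u y n ≤ u y m := by
    have : 1/((m:ℝ)+1) ≤ 1/((n:ℝ)+1) := by
      apply one_div_le_one_div_of_le (by positivity)
      exact_mod_cast by omega
    simp only [u]; linarith
  exact h.trans this

lemma tendsto_cdf_u (hY : Measurable Y) (y : ℝ) :
    Tendsto (fun n : ℕ => _root_.cdf P Y (u y n)) atTop (𝓝 (P {ω | Y ω < y}).toReal) := by
  have h := tendsto_measure_iUnion_atTop (μ := P) (mono_le_u (Y := Y) y)
  rw [iUnion_le_u] at h
  exact (ENNReal.tendsto_toReal (measure_ne_top P _)).comp h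

lemma leftLim_cdf (hY : Measurable Y) (y : ℝ) :
    Function.leftLim (_root_.cdf P Y) y = (P {ω | Y ω < y}).toReal :=
  leftLim_eq_of_seq cdf_mono (tendsto_cdf_u hY y)

lemma cdf_sq_mono : Monotone (fun z => (_root_.cdf P Y z)^2) := fun s t hst => by
  have h1 := cdf_mono (P := P) (Y := Y) hst
  have h2 := cdf_nonneg' (P := P) (Y := Y) s
  dsimp only
  nlinarith

lemma leftLim_cdf_sq (hY : Measurable Y) (y : ℝ) :
    Function.leftLim (fun z => (_root_.cdf P Y z)^2) y = ((P {ω | Y ω < y}).toReal)^2 :=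
  leftLim_eq_of_seq cdf_sq_mono ((tendsto_cdf_u hY y).pow 2)

section Cond

variable {Ω : Type*} {m : MeasurableSpace Ω} [mΩ : MeasurableSpace Ω] {P : Measure Ω}
  [IsProbabilityMeasure P] {Y : Ω → ℝ}

lemma cex_nonneg (s : Set Ω) : ∀ᵐ ω ∂P, 0 ≤ (P[ind s|m]) ω := by
  filter_upwards [condExp_nonneg (μ := P) (m := m)
    (Eventually.of_forall fun ω => ind_nonneg (s := s) ω)] with ω h
  simpa using h

lemma cex_le_one (hm : m ≤ mΩ) {s : Set Ω} (hs : MeasurableSet s) :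
    ∀ᵐ ω ∂P, (P[ind s|m]) ω ≤ 1 := by
  have h := condExp_mono (μ := P) (m := m) (integrable_ind hs) (integrable_const (1:ℝ))
      (Eventually.of_forall fun ω => ind_le_one ω)
  rw [condExp_const hm] at h
  filter_upwards [h] with ω h
  simpa using h

lemma integral_cex (hm : m ≤ mΩ) {s : Set Ω} (hs : MeasurableSet s) :
    ∫ ω, (P[ind s|m]) ω ∂P = (P s).toReal := by
  rw [integral_condExp hm, integral_ind hs]

lemma memℒp_cex (hm : m ≤ mΩ) {s : Set Ω} (hs : MeasurableSet s) :
    MemLp (P[ind s|m]) 2 P := by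
  refine MemLp.of_bound ((stronglyMeasurable_condExp.mono hm).aestronglyMeasurable) 1 ?_
  filter_upwards [cex_nonneg (P := P) (m := m) s, cex_le_one hm hs] with ω h0 h1
  rw [Real.norm_eq_abs, abs_le]
  exact ⟨by linarith, h1⟩

lemma integrable_cex_sq (hm : m ≤ mΩ) {s : Set Ω} (hs : MeasurableSet s) :
    Integrable (fun ω => ((P[ind s|m]) ω)^2) P := by
  simpa using (memℒp_cex hm hs).integrable_sq

lemma cex_mono {s t : Set Ω} (hs : MeasurableSet s) (ht : MeasurableSet t) (hst : s ⊆ t) :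
    ∀ᵐ ω ∂P, (P[ind s|m]) ω ≤ (P[ind t|m]) ω :=
  condExp_mono (integrable_ind hs) (integrable_ind ht)
    (Eventually.of_forall (Set.indicator_le_indicator_of_subset hst (fun _ => zero_le_one)))

/-- `g(t) = ∫ (E[1_{Y ≤ t}|m])² dP`. -/
noncomputable def gfun (P : Measure Ω) (Y : Ω → ℝ) (m : MeasurableSpace Ω) (t : ℝ) : ℝ :=
  ∫ ω, ((P[ind {ω' | Y ω' ≤ t}|m]) ω)^2 ∂P

lemma gfun_mono (hm : m ≤ mΩ) (hY : Measurable Y) : Monotone (gfun P Y m) := by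
  intro s t hst
  refine integral_mono_ae (integrable_cex_sq hm (measurableSet_le hY s))
    (integrable_cex_sq hm (measurableSet_le hY t)) ?_
  filter_upwards [cex_nonneg (P := P) (m := m) {ω' | Y ω' ≤ s},
    cex_mono (m := m) (P := P) (measurableSet_le hY s) (measurableSet_le hY t)
      (fun ω (h : Y ω ≤ s) => h.trans hst)] with ω h0 h1
  nlinarith

lemma gfun_nonneg (t : ℝ) : 0 ≤ gfun P Y m t :=
  integral_nonneg fun ω => sq_nonneg _

lemma gfun_le_one (hm : m ≤ mΩ) (hY : Measurable Y) (t : ℝ) : gfun P Y m t ≤ 1 := by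
  have h : ∫ ω, (1:ℝ) ∂P = 1 := by simp
  rw [gfun, ← h]
  refine integral_mono_ae (integrable_cex_sq hm (measurableSet_le hY t)) (integrable_const 1) ?_
  filter_upwards [cex_nonneg (P := P) (m := m) {ω' | Y ω' ≤ t},
    cex_le_one hm (measurableSet_le hY t)] with ω h0 h1
  nlinarith

/-- the limit value `G(y) = ∫ (E[1_{Y < y}|m])² dP` -/
noncomputable def Gfun (P : Measure Ω) (Y : Ω → ℝ) (m : MeasurableSpace Ω) (y : ℝ) : ℝ :=
  ∫ ω, ((P[ind {ω' | Y ω' < y}|m]) ω)^2 ∂P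

lemma sq_diff_bound (hm : m ≤ mΩ) {s t : Set Ω} (hs : MeasurableSet s) (ht : MeasurableSet t)
    (hst : s ⊆ t) :
    (∫ ω, ((P[ind t|m]) ω)^2 ∂P) - (∫ ω, ((P[ind s|m]) ω)^2 ∂P)
      ∈ Set.Icc (0:ℝ) (2 * ((P t).toReal - (P s).toReal)) := by
  have hint_s := integrable_cex_sq (P := P) hm hs
  have hint_t := integrable_cex_sq (P := P) hm ht
  rw [Set.mem_Icc]
  constructor
  · have := integral_mono_ae hint_s hint_t (by
      filter_upwards [cex_nonneg (P := P) (m := m) s, cex_mono (P := P) (m := m) hs ht hst]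
        with ω h0 h1
      nlinarith)
    linarith
  · have hdiff : (∫ ω, ((P[ind t|m]) ω)^2 ∂P) - (∫ ω, ((P[ind s|m]) ω)^2 ∂P)
        = ∫ ω, ((P[ind t|m]) ω)^2 - ((P[ind s|m]) ω)^2 ∂P := (integral_sub hint_t hint_s).symm
    have hbound : ∫ ω, ((P[ind t|m]) ω)^2 - ((P[ind s|m]) ω)^2 ∂P
        ≤ ∫ ω, 2 * ((P[ind t|m]) ω - (P[ind s|m]) ω) ∂P := by
      refine integral_mono_ae (hint_t.sub hint_s)
        (((integrable_condExp).sub (integrable_condExp)).const_mul 2) ?_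
      filter_upwards [cex_nonneg (P := P) (m := m) s, cex_mono (P := P) (m := m) hs ht hst,
        cex_le_one hm ht] with ω h0 h1 h2
      nlinarith
    have hval : ∫ ω, 2 * ((P[ind t|m]) ω - (P[ind s|m]) ω) ∂P
        = 2 * ((P t).toReal - (P s).toReal) := by
      rw [MeasureTheory.integral_const_mul, integral_sub integrable_condExp integrable_condExp,
        integral_cex hm ht, integral_cex hm hs]
    rw [hdiff, ← hval]
    exact hbound

lemma tendsto_gfun_u (hm : m ≤ mΩ) (hY : Measurable Y) (y : ℝ) :
    Tendsto (fun n : ℕ => gfun P Y m (u y n)) atTop (𝓝 (Gfun P Y m y)) := by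
  have key : ∀ n : ℕ, Gfun P Y m y - 2 * ((P {ω | Y ω < y}).toReal - _root_.cdf P Y (u y n))
      ≤ gfun P Y m (u y n) ∧ gfun P Y m (u y n) ≤ Gfun P Y m y := by
    intro n
    have h := sq_diff_bound (P := P) hm (measurableSet_le hY (u y n)) (measurableSet_lt' hY y)
      (fun ω (h : Y ω ≤ u y n) => lt_of_le_of_lt h (u_lt y n))
    obtain ⟨h1, h2⟩ := h
    constructor
    · simp only [gfun, Gfun, _root_.cdf] at h1 h2 ⊢
      linarith
    · simp only [gfun, Gfun] at h1 h2 ⊢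
      linarith
  have hlow : Tendsto (fun n : ℕ =>
      Gfun P Y m y - 2 * ((P {ω | Y ω < y}).toReal - _root_.cdf P Y (u y n))) atTop
      (𝓝 (Gfun P Y m y)) := by
    have := tendsto_cdf_u (P := P) hY y
    have h2 : Tendsto (fun n : ℕ =>
        Gfun P Y m y - 2 * ((P {ω | Y ω < y}).toReal - _root_.cdf P Y (u y n))) atTop
        (𝓝 (Gfun P Y m y - 2 * ((P {ω | Y ω < y}).toReal - (P {ω | Y ω < y}).toReal))) :=
      tendsto_const_nhds.sub ((tendsto_const_nhds.sub this).const_mul 2)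
    simpa using h2
  exact tendsto_of_tendsto_of_tendsto_of_le_of_le hlow tendsto_const_nhds
    (fun n => (key n).1) (fun n => (key n).2)

lemma leftLim_gfun (hm : m ≤ mΩ) (hY : Measurable Y) (y : ℝ) :
    Function.leftLim (gfun P Y m) y = Gfun P Y m y :=
  leftLim_eq_of_seq (gfun_mono hm hY) (tendsto_gfun_u hm hY y)

end Cond

section Var

variable {Ω : Type*} {m : MeasurableSpace Ω} [mΩ : MeasurableSpace Ω] {P : Measure Ω}
  [IsProbabilityMeasure P] {Y : Ω → ℝ}

lemma ind_ge_eq_one_sub (y : ℝ) :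
    ind {ω : Ω | y ≤ Y ω} = (fun _ => (1:ℝ)) - ind {ω' | Y ω' < y} := by
  funext ω
  by_cases h : y ≤ Y ω
  · simp [ind, h, not_lt.mpr h]
  · simp [ind, h, not_le.mp h]

lemma cex_ge_eq (hm : m ≤ mΩ) (hY : Measurable Y) (y : ℝ) :
    ∀ᵐ ω ∂P, (P[ind {ω' | y ≤ Y ω'}|m]) ω = 1 - (P[ind {ω' | Y ω' < y}|m]) ω := by
  have h1 : P[ind {ω' : Ω | y ≤ Y ω'}|m]
      = P[(fun _ => (1:ℝ)) - ind {ω' | Y ω' < y}|m] := by rw [← ind_ge_eq_one_sub]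
  have h2 := condExp_sub (μ := P) (m := m) (integrable_const (1:ℝ))
    (integrable_ind (measurableSet_lt' hY y))
  rw [condExp_const hm] at h2
  rw [h1]
  filter_upwards [h2] with ω h
  simpa using h

lemma variance_cex (hm : m ≤ mΩ) (hY : Measurable Y) (y : ℝ) :
    variance (P[ind {ω | y ≤ Y ω}|m]) P
      = Gfun P Y m y - ((P {ω | Y ω < y}).toReal)^2 := by
  set E' := P[ind {ω' : Ω | Y ω' < y}|m] with hE'
  set Q := (P {ω | Y ω < y}).toReal with hQ
  have hXE := cex_ge_eq (P := P) hm hY y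
  have hintE' : Integrable E' P := integrable_condExp
  have hintE'sq : Integrable (fun ω => E' ω ^ 2) P := integrable_cex_sq (P := P) hm (measurableSet_lt' hY y)
  have hint1 : ∫ ω, (P[ind {ω' | y ≤ Y ω'}|m]) ω ∂P = 1 - Q := by
    rw [integral_cex hm (measurableSet_ge hY y), prob_ge_eq hY]
  have hsq : (fun ω => ((P[ind {ω' | y ≤ Y ω'}|m]) ω)^2)
      =ᵐ[P] fun ω => 1 - 2 * E' ω + E' ω ^ 2 := by
    filter_upwards [hXE] with ω h
    rw [h]; ring
  have hint2 : ∫ ω, ((P[ind {ω' | y ≤ Y ω'}|m]) ω)^2 ∂P = 1 - 2 * Q + Gfun P Y m y := by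
    rw [integral_congr_ae hsq]
    have h1 : Integrable (fun ω => 1 - 2 * E' ω) P := by
      exact (integrable_const (1:ℝ)).sub (hintE'.const_mul 2)
    rw [integral_add h1 hintE'sq, integral_sub (integrable_const 1) (hintE'.const_mul 2),
      MeasureTheory.integral_const_mul, integral_condExp hm, integral_ind (measurableSet_lt' hY y)]
    simp [Gfun, hQ]
    rfl
  have hvar := variance_eq_sub (μ := P) (memℒp_cex (P := P) hm (measurableSet_ge hY y))
  have hpow : ∫ ω, ((P[ind {ω' | y ≤ Y ω'}|m]) ^ 2) ω ∂P
      = ∫ ω, ((P[ind {ω' | y ≤ Y ω'}|m]) ω)^2 ∂P := by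
    simp only [Pi.pow_apply]
  rw [hvar, hpow, hint2, hint1]
  ring

end Var

section Pos

variable {Ω : Type*} [mΩ : MeasurableSpace Ω] {P : Measure Ω}
  [IsProbabilityMeasure P] {Y : Ω → ℝ}

/-- A real random variable is non-degenerate if it is not almost surely constant. -/
-- (we restate to avoid depending on placement; the real one is in the main file)

lemma prob_eq_one_of_cdf_eq_one {y : ℝ} (h : _root_.cdf P Y y = 1) : P {ω | Y ω ≤ y} = 1 := by
  have := (ENNReal.toReal_eq_toReal_iff' (measure_ne_top P _) ENNReal.one_ne_top).mp
    (by simpa [_root_.cdf] using h)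
  simpa using this

lemma prob_eq_zero_of_cdf_eq_zero {y : ℝ} (h : _root_.cdf P Y y = 0) : P {ω | Y ω ≤ y} = 0 := by
  have := (ENNReal.toReal_eq_toReal_iff' (measure_ne_top P _) ENNReal.zero_ne_top).mp
    (by simpa [_root_.cdf] using h)
  simpa using this

lemma exists_cdf_between (hY : Measurable Y) (hnd : ¬ ∃ c : ℝ, ∀ᵐ ω ∂P, Y ω = c) :
    ∃ y₀ : ℝ, 0 < _root_.cdf P Y y₀ ∧ _root_.cdf P Y y₀ < 1 := by
  by_contra hcon
  push_neg at hcon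
  have hdichot : ∀ y, P {ω | Y ω ≤ y} = 0 ∨ P {ω | Y ω ≤ y} = 1 := by
    intro y
    rcases eq_or_lt_of_le (cdf_nonneg' (P := P) (Y := Y) y) with h | h
    · exact Or.inl (prob_eq_zero_of_cdf_eq_zero h.symm)
    · exact Or.inr (prob_eq_one_of_cdf_eq_one (le_antisymm (cdf_le_one' y) (hcon y h)))
  have hSne : ∃ y, P {ω | Y ω ≤ y} = 1 := by
    by_contra h
    push_neg at h
    have h0 : ∀ n : ℕ, P {ω | Y ω ≤ (n:ℝ)} = 0 := fun n => (hdichot n).resolve_right (h n)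
    have huniv : (Set.univ : Set Ω) = ⋃ n : ℕ, {ω | Y ω ≤ (n:ℝ)} := by
      ext ω
      simp only [Set.mem_univ, Set.mem_iUnion, Set.mem_setOf_eq, true_iff]
      exact exists_nat_ge (Y ω)
    have hz := measure_iUnion_null h0
    rw [← huniv, measure_univ] at hz
    exact one_ne_zero hz
  have hSlow : ∃ y, P {ω | Y ω ≤ y} = 0 := by
    by_contra h
    push_neg at h
    have h1 : ∀ n : ℕ, P {ω | Y ω ≤ -(n:ℝ)} = 1 := fun n => (hdichot _).resolve_left (h _)
    have h2 : ∀ n : ℕ, P {ω | -(n:ℝ) < Y ω} = 0 := by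
      intro n
      have hc : {ω | -(n:ℝ) < Y ω} = {ω | Y ω ≤ -(n:ℝ)}ᶜ := by ext ω; simp [not_le]
      rw [hc, measure_compl (measurableSet_le hY _) (measure_ne_top P _), h1 n, measure_univ]
      simp
    have huniv : (Set.univ : Set Ω) = ⋃ n : ℕ, {ω | -(n:ℝ) < Y ω} := by
      ext ω
      simp only [Set.mem_univ, Set.mem_iUnion, Set.mem_setOf_eq, true_iff]
      obtain ⟨n, hn⟩ := exists_nat_gt (-(Y ω))
      exact ⟨n, by linarith⟩
    have hz := measure_iUnion_null h2
    rw [← huniv, measure_univ] at hz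
    exact one_ne_zero hz
  obtain ⟨y₁, hy₁⟩ := hSne
  obtain ⟨yb, hyb⟩ := hSlow
  set S : Set ℝ := {y | P {ω | Y ω ≤ y} = 1} with hS
  have hSne' : S.Nonempty := ⟨y₁, hy₁⟩
  have hbdd : BddBelow S := by
    refine ⟨yb, fun z hz => ?_⟩
    by_contra hzy
    push_neg at hzy
    have : P {ω | Y ω ≤ yb} = 1 := by
      refine le_antisymm prob_le_one ?_
      rw [← hz]
      exact measure_mono (fun ω (h : Y ω ≤ z) => h.trans hzy.le)
    rw [hyb] at this
    exact zero_ne_one this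
  set c := sInf S with hc
  have hlt : P {ω | Y ω < c} = 0 := by
    have hU := iUnion_le_u (Y := Y) c
    rw [← hU]
    refine measure_iUnion_null fun n => ?_
    rcases hdichot (u c n) with h | h
    · exact h
    · exfalso
      have : c ≤ u c n := csInf_le hbdd h
      exact absurd this (not_le.mpr (u_lt c n))
  have hgt : P {ω | c < Y ω} = 0 := by
    have hsub : {ω | c < Y ω} ⊆ ⋃ n : ℕ, {ω | c + 1/((n:ℝ)+1) < Y ω} := by
      intro ω (h : c < Y ω)
      obtain ⟨n, hn⟩ := exists_nat_one_div_lt (show (0:ℝ) < Y ω - c by linarith)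
      exact Set.mem_iUnion.mpr ⟨n, by simp only [Set.mem_setOf_eq]; linarith⟩
    refine measure_mono_null hsub (measure_iUnion_null fun n => ?_)
    obtain ⟨z, hzS, hzlt⟩ := exists_lt_of_csInf_lt hSne'
      (lt_add_of_pos_right c (by positivity : (0:ℝ) < 1/((n:ℝ)+1)))
    have hzc : P {ω | z < Y ω} = 0 := by
      have hc' : {ω | z < Y ω} = {ω | Y ω ≤ z}ᶜ := by ext ω; simp [not_le]
      rw [hc', measure_compl (measurableSet_le hY _) (measure_ne_top P _), hzS, measure_univ]
      simp
    exact measure_mono_null (fun ω (h : c + 1/((n:ℝ)+1) < Y ω) => lt_trans hzlt h) hzc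
  refine hnd ⟨c, ?_⟩
  rw [ae_iff]
  refine measure_mono_null (fun ω (h : ¬ Y ω = c) => ?_) (measure_union_null hlt hgt)
  rcases lt_or_gt_of_ne h with h' | h'
  · exact Or.inl h'
  · exact Or.inr h'

lemma null_N (hY : Measurable Y) :
    (P.map Y) {y : ℝ | P {ω | y ≤ Y ω} = 0} = 0 := by
  set N : Set ℝ := {y : ℝ | P {ω | y ≤ Y ω} = 0} with hN
  have hup : ∀ y ∈ N, ∀ z, y ≤ z → z ∈ N := fun y hy z hyz =>
    measure_mono_null (fun ω (h : z ≤ Y ω) => hyz.trans h) hy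
  rcases Set.eq_empty_or_nonempty N with hNe | ⟨y₁, hy₁⟩
  · simp [hNe]
  have hbdd : BddBelow N := by
    by_contra hb
    have hall : ∀ y : ℝ, y ∈ N := by
      intro y
      rw [not_bddBelow_iff] at hb
      obtain ⟨z, hzN, hzy⟩ := hb y
      exact hup z hzN y hzy.le
    have huniv : (Set.univ : Set Ω) = ⋃ n : ℕ, {ω | -(n:ℝ) ≤ Y ω} := by
      ext ω
      simp only [Set.mem_univ, Set.mem_iUnion, Set.mem_setOf_eq, true_iff]
      obtain ⟨n, hn⟩ := exists_nat_gt (-(Y ω))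
      exact ⟨n, by linarith⟩
    have hz := measure_iUnion_null (fun n : ℕ => hall (-(n:ℝ)))
    rw [← huniv, measure_univ] at hz
    exact absurd hz one_ne_zero
  set s := sInf N with hs
  by_cases hsN : s ∈ N
  · have h0 : (P.map Y) (Set.Ici s) = 0 := by
      rw [Measure.map_apply hY measurableSet_Ici]
      exact hsN
    exact measure_mono_null (fun y hy => (csInf_le hbdd hy : s ≤ y)) h0
  · have hIoi : N ⊆ Set.Ioi s := by
      intro y hy
      rcases eq_or_lt_of_le (csInf_le hbdd hy) with h | h
      · rw [← h] at hy
        exact absurd hy hsN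
      · exact h
    refine measure_mono_null hIoi ?_
    rw [Measure.map_apply hY measurableSet_Ioi]
    have hsub : (Y ⁻¹' Set.Ioi s) ⊆ ⋃ n : ℕ, {ω | s + 1/((n:ℝ)+1) ≤ Y ω} := by
      intro ω (h : s < Y ω)
      obtain ⟨n, hn⟩ := exists_nat_one_div_lt (show (0:ℝ) < Y ω - s by linarith)
      exact Set.mem_iUnion.mpr ⟨n, by simp only [Set.mem_setOf_eq]; linarith⟩
    refine measure_mono_null hsub (measure_iUnion_null fun n => ?_)
    have hmem : s + 1/((n:ℝ)+1) ∈ N := by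
      obtain ⟨z, hzN, hzlt⟩ := exists_lt_of_csInf_lt ⟨y₁, hy₁⟩
        (lt_add_of_pos_right s (by positivity : (0:ℝ) < 1/((n:ℝ)+1)))
      exact hup z hzN _ hzlt.le
    exact hmem

lemma map_Ioi_pos (hY : Measurable Y) {y₀ : ℝ} (hc1 : _root_.cdf P Y y₀ < 1) :
    0 < (P.map Y) (Set.Ioi y₀) := by
  rw [Measure.map_apply hY measurableSet_Ioi, pos_iff_ne_zero]
  intro h0
  have hcompl : {ω | Y ω ≤ y₀} = (Y ⁻¹' Set.Ioi y₀)ᶜ := by ext ω; simp [not_lt]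
  have : P {ω | Y ω ≤ y₀} = 1 := by
    rw [hcompl, measure_compl (hY measurableSet_Ioi) (measure_ne_top P _), h0, measure_univ]
    simp
  have := congrArg ENNReal.toReal this
  simp only [ENNReal.toReal_one] at this
  exact absurd this (ne_of_lt hc1)

end Pos

section Final

variable {Ω : Type*} {m : MeasurableSpace Ω} [mΩ : MeasurableSpace Ω] {P : Measure Ω}
  [IsProbabilityMeasure P] {Y : Ω → ℝ}

lemma integrable_of_meas_bounded {μ : Measure ℝ} [IsFiniteMeasure μ] {f : ℝ → ℝ}
    (hf : Measurable f) (h0 : ∀ x, 0 ≤ f x) (h1 : ∀ x, f x ≤ 1) : Integrable f μ :=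
  memLp_one_iff_integrable.mp (MemLp.of_bound hf.aestronglyMeasurable 1
    (Eventually.of_forall fun x => by
      rw [Real.norm_eq_abs, abs_le]
      exact ⟨by linarith [h0 x], h1 x⟩))

lemma p_anti : Antitone (fun y : ℝ => (P {ω | y ≤ Y ω}).toReal) := fun s t hst =>
  ENNReal.toReal_mono (measure_ne_top P _) (measure_mono fun ω (h : t ≤ Y ω) => hst.trans h)

lemma p_le_one (y : ℝ) : (P {ω | y ≤ Y ω}).toReal ≤ 1 := by
  simpa using ENNReal.toReal_mono ENNReal.one_ne_top (prob_le_one (μ := P) (s := {ω | y ≤ Y ω}))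

lemma Q_mono : Monotone (fun y : ℝ => (P {ω | Y ω < y}).toReal) := fun s t hst =>
  ENNReal.toReal_mono (measure_ne_top P _) (measure_mono fun ω (h : Y ω < s) => lt_of_lt_of_le h hst)

lemma Q_le_one (y : ℝ) : (P {ω | Y ω < y}).toReal ≤ 1 := by
  simpa using ENNReal.toReal_mono ENNReal.one_ne_top (prob_le_one (μ := P) (s := {ω | Y ω < y}))

lemma denom_pos (hY : Measurable Y) (hnd : ¬∃ c : ℝ, ∀ᵐ ω ∂P, Y ω = c) :
    0 < ∫ y, variance (ind {ω | y ≤ Y ω}) P ∂(P.map Y) := by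
  haveI : IsProbabilityMeasure (P.map Y) := Measure.isProbabilityMeasure_map hY.aemeasurable
  obtain ⟨y₀, hc0, hc1⟩ := exists_cdf_between hY hnd
  have hfun : (fun y : ℝ => variance (ind {ω | y ≤ Y ω}) P)
      = fun y => (P {ω | y ≤ Y ω}).toReal * (1 - (P {ω | y ≤ Y ω}).toReal) :=
    funext fun y => variance_ind (measurableSet_ge hY y)
  rw [hfun]
  set f : ℝ → ℝ := fun y => (P {ω | y ≤ Y ω}).toReal * (1 - (P {ω | y ≤ Y ω}).toReal) with hfdef
  have h0 : ∀ y, 0 ≤ f y := fun y =>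
    mul_nonneg ENNReal.toReal_nonneg (by linarith [p_le_one (P := P) (Y := Y) y])
  have hmeas : Measurable f := (p_anti (P := P) (Y := Y)).measurable.mul
    (measurable_const.sub (p_anti (P := P) (Y := Y)).measurable)
  have hint : Integrable f (P.map Y) := integrable_of_meas_bounded hmeas h0
    (fun y => by
      simp only [hfdef]
      nlinarith [ENNReal.toReal_nonneg (a := P {ω | y ≤ Y ω}), p_le_one (P := P) (Y := Y) y])
  rw [integral_pos_iff_support_of_nonneg_ae (Eventually.of_forall h0) hint]
  have hsub : Set.Ioi y₀ \ {y : ℝ | P {ω | y ≤ Y ω} = 0} ⊆ Function.support f := by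
    rintro y ⟨hy1, hy2⟩
    have hp_pos : 0 < (P {ω | y ≤ Y ω}).toReal :=
      ENNReal.toReal_pos (by simpa using hy2) (measure_ne_top P _)
    have hpq : (P {ω | y ≤ Y ω}).toReal = 1 - (P {ω | Y ω < y}).toReal := prob_ge_eq hY y
    have hQ : _root_.cdf P Y y₀ ≤ (P {ω | Y ω < y}).toReal :=
      ENNReal.toReal_mono (measure_ne_top P _)
        (measure_mono fun ω (h : Y ω ≤ y₀) => lt_of_le_of_lt h hy1)
    have h1p : 0 < 1 - (P {ω | y ≤ Y ω}).toReal := by linarith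
    exact ne_of_gt (mul_pos hp_pos h1p)
  calc (0:ℝ≥0∞) < (P.map Y) (Set.Ioi y₀) := map_Ioi_pos hY hc1
    _ = (P.map Y) (Set.Ioi y₀ \ {y : ℝ | P {ω | y ≤ Y ω} = 0}) :=
        (measure_diff_null (null_N hY)).symm
    _ ≤ (P.map Y) (Function.support f) := measure_mono hsub

lemma intF_pos (hY : Measurable Y) (hnd : ¬∃ c : ℝ, ∀ᵐ ω ∂P, Y ω = c) :
    0 < ∫ y, Function.leftLim (fun z => (_root_.cdf P Y z)^2) y ∂(P.map Y) := by
  haveI : IsProbabilityMeasure (P.map Y) := Measure.isProbabilityMeasure_map hY.aemeasurable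
  obtain ⟨y₀, hc0, hc1⟩ := exists_cdf_between hY hnd
  have hfun : (fun y : ℝ => Function.leftLim (fun z => (_root_.cdf P Y z)^2) y)
      = fun y => ((P {ω | Y ω < y}).toReal)^2 := funext fun y => leftLim_cdf_sq hY y
  rw [hfun]
  have h0 : ∀ y : ℝ, 0 ≤ ((P {ω | Y ω < y}).toReal)^2 := fun y => sq_nonneg _
  have hmeas : Measurable (fun y : ℝ => ((P {ω | Y ω < y}).toReal)^2) :=
    (Q_mono (P := P) (Y := Y)).measurable.pow_const 2
  have hint : Integrable (fun y : ℝ => ((P {ω | Y ω < y}).toReal)^2) (P.map Y) :=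
    integrable_of_meas_bounded hmeas h0 (fun y => by
      nlinarith [ENNReal.toReal_nonneg (a := P {ω | Y ω < y}), Q_le_one (P := P) (Y := Y) y])
  rw [integral_pos_iff_support_of_nonneg_ae (Eventually.of_forall h0) hint]
  have hsub : Set.Ioi y₀ ⊆ Function.support (fun y : ℝ => ((P {ω | Y ω < y}).toReal)^2) := by
    intro y hy
    have hQ : _root_.cdf P Y y₀ ≤ (P {ω | Y ω < y}).toReal :=
      ENNReal.toReal_mono (measure_ne_top P _)
        (measure_mono fun ω (h : Y ω ≤ y₀) => lt_of_le_of_lt h hy)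
    exact ne_of_gt (pow_pos (by linarith) 2)
  exact lt_of_lt_of_le (map_Ioi_pos hY hc1) (measure_mono hsub)

lemma Gfun_nonneg (y : ℝ) : 0 ≤ Gfun P Y m y := integral_nonneg fun ω => sq_nonneg _

lemma Gfun_le_one (hm : m ≤ mΩ) (hY : Measurable Y) (y : ℝ) : Gfun P Y m y ≤ 1 := by
  have h : ∫ ω, (1:ℝ) ∂P = 1 := by simp
  rw [Gfun, ← h]
  refine integral_mono_ae (integrable_cex_sq (P := P) hm (measurableSet_lt' hY y))
    (integrable_const 1) ?_
  filter_upwards [cex_nonneg (P := P) (m := m) {ω' | Y ω' < y},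
    cex_le_one hm (measurableSet_lt' hY y)] with ω h0 h1
  nlinarith

lemma numerator_eq (hm : m ≤ mΩ) (hY : Measurable Y) :
    ∫ y, variance (P[ind {ω | y ≤ Y ω}|m]) P ∂(P.map Y)
      = (∫ y, Function.leftLim (gfun P Y m) y ∂(P.map Y))
        - ∫ y, Function.leftLim (fun z => (_root_.cdf P Y z)^2) y ∂(P.map Y) := by
  haveI : IsProbabilityMeasure (P.map Y) := Measure.isProbabilityMeasure_map hY.aemeasurable
  have hfun : (fun y : ℝ => variance (P[ind {ω | y ≤ Y ω}|m]) P)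
      = fun y => Function.leftLim (gfun P Y m) y
          - Function.leftLim (fun z => (_root_.cdf P Y z)^2) y := by
    funext y
    rw [variance_cex hm hY y, leftLim_gfun hm hY y, leftLim_cdf_sq hY y]
  rw [hfun]
  have hg_int : Integrable (Function.leftLim (gfun P Y m)) (P.map Y) := by
    have hgm : Monotone (Function.leftLim (gfun P Y m)) := (gfun_mono hm hY).leftLim
    refine integrable_of_meas_bounded hgm.measurable (fun y => ?_) (fun y => ?_)
    · rw [leftLim_gfun hm hY y]; exact Gfun_nonneg y
    · rw [leftLim_gfun hm hY y]; exact Gfun_le_one hm hY y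
  have hF_int : Integrable (fun y => Function.leftLim (fun z => (_root_.cdf P Y z)^2) y)
      (P.map Y) := by
    have hFm : Monotone (Function.leftLim (fun z => (_root_.cdf P Y z)^2)) :=
      (cdf_sq_mono (P := P) (Y := Y)).leftLim
    refine integrable_of_meas_bounded hFm.measurable (fun y => ?_) (fun y => ?_)
    · rw [leftLim_cdf_sq hY y]; exact sq_nonneg _
    · rw [leftLim_cdf_sq hY y]
      nlinarith [ENNReal.toReal_nonneg (a := P {ω | Y ω < y}), Q_le_one (P := P) (Y := Y) y]
  exact integral_sub hg_int hF_int

end Final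

end ACCaux


theorem xi_dimension_reduction_principle
    {Ω : Type*} [MeasurableSpace Ω] (P : Measure Ω) [IsProbabilityMeasure P]
    {p : ℕ} (X : Ω → (Fin p → ℝ)) (Y : Ω → ℝ)
    (hX : Measurable X) (hY : Measurable Y) (hnd : Nondegenerate P Y)
    (a b : ℝ)
    (ha : a = (∫ y, variance (Set.indicator {ω | y ≤ Y ω} (fun _ => (1 : ℝ))) P
                ∂(P.map Y))⁻¹)
    (hb : b = a * ∫ y, Function.leftLim (fun z => (cdf P Y z) ^ 2) y ∂(P.map Y)) :
    0 < a ∧ 0 < b ∧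
      xi P Y X =
        a * (∫ y, Function.leftLim (fun t => psi P Y X t t) y ∂(P.map Y)) - b := by
  classical
  have hnd' : ¬∃ c : ℝ, ∀ᵐ ω ∂P, Y ω = c := hnd
  have hm : MeasurableSpace.comap X inferInstance ≤ (inferInstance : MeasurableSpace Ω) :=
    hX.comap_le
  haveI : IsProbabilityMeasure (P.map Y) := Measure.isProbabilityMeasure_map hY.aemeasurable
  have hden_eq : (fun y : ℝ => variance (Set.indicator {ω | y ≤ Y ω} (fun _ => (1:ℝ))) P)
      = fun y : ℝ => variance (ACCaux.ind {ω | y ≤ Y ω}) P := rfl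
  have hD : 0 < ∫ y, variance (Set.indicator {ω | y ≤ Y ω} (fun _ => (1:ℝ))) P ∂(P.map Y) := by
    rw [hden_eq]
    exact ACCaux.denom_pos hY hnd'
  have ha' : 0 < a := by
    rw [ha]
    exact inv_pos.mpr hD
  have hb' : 0 < b := by
    rw [hb]
    exact mul_pos ha' (ACCaux.intF_pos hY hnd')
  refine ⟨ha', hb', ?_⟩
  have hpsig : (fun t => psi P Y X t t) = ACCaux.gfun P Y (MeasurableSpace.comap X inferInstance) := by
    funext t
    refine integral_congr_ae (Eventually.of_forall fun ω => ?_)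
    exact (pow_two _).symm
  have hnum := ACCaux.numerator_eq (P := P) (m := MeasurableSpace.comap X inferInstance) hm hY
  have hxi : xi P Y X = (∫ y, variance (P[ACCaux.ind {ω | y ≤ Y ω}|MeasurableSpace.comap X inferInstance]) P ∂(P.map Y)) /
      (∫ y, variance (ACCaux.ind {ω | y ≤ Y ω}) P ∂(P.map Y)) := rfl
  rw [hxi, hnum, hpsig, hb, ha, ← hden_eq]
  rw [div_eq_mul_inv]
  ring
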